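/- Let A, B be positive invertible operators (or positive definite matrices) and t ∈ (0,1). Then A♯ₜB ≤ A ℓₜ B ≤ (1/2)(A♯ₜB + A∇ₜB) ≤ A∇ₜB, where A♯ₜB = A^{1/2}(A^{-1/2}BA^{-1/2})^t A^{1/2}, A∇ₜB = (1−t)A + tB, and A ℓₜ B = A^{1/2} f_t(A^{-1/2}BA^{-1/2}) A^{1/2} with f_t(x) = ((1−t)/t)∫₀ᵗ x^α dα + (t/(1−t))∫ₜ¹ x^α dα. -/

import Mathlib

open Set MeasureTheory

variable {H : Type*} [NormedAddCommGroup H] [InnerProductSpace ℂ H] [CompleteSpace H]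

/-- The Kubo–Ando operator mean with representing function `f`:
`A σ B = A^{1/2} f(A^{-1/2} B A^{-1/2}) A^{1/2}`. -/
noncomputable def opMean (f : ℝ → ℝ) (A B : H →L[ℂ] H) : H →L[ℂ] H :=
  cfc Real.sqrt A *
    cfc f (cfc (fun x : ℝ => x ^ (-(1:ℝ)/2)) A * B * cfc (fun x : ℝ => x ^ (-(1:ℝ)/2)) A) *
    cfc Real.sqrt A

/-- The weighted geometric operator mean `A ♯ₜ B`. -/
noncomputable def weightedGeom (t : ℝ) (A B : H →L[ℂ] H) : H →L[ℂ] H :=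
  opMean (fun x : ℝ => x ^ t) A B

/-- The weighted logarithmic operator mean `A ℓₜ B`, with representing function
`f_t(x) = ((1-t)/t)∫₀ᵗ x^α dα + (t/(1-t))∫ₜ¹ x^α dα`. -/
noncomputable def weightedLog (t : ℝ) (A B : H →L[ℂ] H) : H →L[ℂ] H :=
  opMean (fun x : ℝ => ((1 - t) / t) * (∫ α in (0:ℝ)..t, x ^ α) +
    (t / (1 - t)) * (∫ α in t..(1:ℝ), x ^ α)) A B


private lemma integral_affine (a b c d : ℝ) :
    ∫ α in a..b, (c + d * α) = c * (b - a) + d * ((b ^ 2 - a ^ 2) / 2) := by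
  rw [intervalIntegral.integral_add intervalIntegrable_const
    (((by fun_prop : Continuous fun α : ℝ => d * α)).intervalIntegrable a b),
    intervalIntegral.integral_const, intervalIntegral.integral_const_mul, integral_id,
    smul_eq_mul]
  ring

private lemma hh_low {a b : ℝ} (hab : a ≤ b) (L : ℝ) :
    (b - a) * Real.exp ((a + b) / 2 * L) ≤ ∫ α in a..b, Real.exp (α * L) := by
  set c : ℝ := (a + b) / 2 with hc
  set E : ℝ := Real.exp (c * L) with hE
  have key : ∀ α : ℝ, (E - E * L * c) + (E * L) * α ≤ Real.exp (α * L) := by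
    intro α
    have h1 : 1 + (α - c) * L ≤ Real.exp ((α - c) * L) := by
      have := Real.add_one_le_exp ((α - c) * L); linarith
    have h2 : E * (1 + (α - c) * L) ≤ E * Real.exp ((α - c) * L) :=
      mul_le_mul_of_nonneg_left h1 (Real.exp_nonneg _)
    have h3 : E * Real.exp ((α - c) * L) = Real.exp (α * L) := by
      rw [hE, ← Real.exp_add]; ring_nf
    calc (E - E * L * c) + (E * L) * α = E * (1 + (α - c) * L) := by ring
      _ ≤ E * Real.exp ((α - c) * L) := h2
      _ = Real.exp (α * L) := h3
  have hint : ∫ α in a..b, ((E - E * L * c) + (E * L) * α) ≤ ∫ α in a..b, Real.exp (α * L) := by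
    apply intervalIntegral.integral_mono_on hab
    · exact ((continuous_const.add (continuous_const.mul continuous_id)).intervalIntegrable a b)
    · exact ((Real.continuous_exp.comp (continuous_id.mul continuous_const)).intervalIntegrable a b)
    · exact fun α _ => key α
  rw [integral_affine] at hint
  calc (b - a) * E = (E - E * L * c) * (b - a) + E * L * ((b ^ 2 - a ^ 2) / 2) := by
        rw [hc]; ring
    _ ≤ _ := hint

private lemma hh_high {a b : ℝ} (hab : a < b) (L : ℝ) :
    ∫ α in a..b, Real.exp (α * L) ≤ (b - a) / 2 * (Real.exp (a * L) + Real.exp (b * L)) := by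
  set E1 : ℝ := Real.exp (a * L) with hE1
  set E2 : ℝ := Real.exp (b * L) with hE2
  have hba : (0:ℝ) < b - a := by linarith
  have key : ∀ α ∈ Icc a b, Real.exp (α * L) ≤
      ((b * E1 - a * E2) / (b - a)) + ((E2 - E1) / (b - a)) * α := by
    intro α hα
    have hw1 : (0:ℝ) ≤ (b - α) / (b - a) := by
      apply div_nonneg (by linarith [hα.2]) hba.le
    have hw2 : (0:ℝ) ≤ (α - a) / (b - a) := by
      apply div_nonneg (by linarith [hα.1]) hba.le
    have hsum : (b - α) / (b - a) + (α - a) / (b - a) = 1 := by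
      field_simp
      ring
    have hconv : Real.exp ((b - α) / (b - a) * (a * L) + (α - a) / (b - a) * (b * L)) ≤
        (b - α) / (b - a) * Real.exp (a * L) + (α - a) / (b - a) * Real.exp (b * L) :=
      convexOn_exp.2 (mem_univ (a * L)) (mem_univ (b * L)) hw1 hw2 hsum
    have harg : (b - α) / (b - a) * (a * L) + (α - a) / (b - a) * (b * L) = α * L := by
      field_simp
      ring
    rw [harg] at hconv
    calc Real.exp (α * L)
        ≤ (b - α) / (b - a) * E1 + (α - a) / (b - a) * E2 := hconv
      _ = ((b * E1 - a * E2) / (b - a)) + ((E2 - E1) / (b - a)) * α := by field_simp; ring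
  have hint : ∫ α in a..b, Real.exp (α * L) ≤
      ∫ α in a..b, (((b * E1 - a * E2) / (b - a)) + ((E2 - E1) / (b - a)) * α) := by
    apply intervalIntegral.integral_mono_on hab.le
    · exact ((Real.continuous_exp.comp (continuous_id.mul continuous_const)).intervalIntegrable a b)
    · exact ((continuous_const.add (continuous_const.mul continuous_id)).intervalIntegrable a b)
    · exact key
  rw [integral_affine] at hint
  calc ∫ α in a..b, Real.exp (α * L) ≤ _ := hint
    _ = (b - a) / 2 * (E1 + E2) := by field_simp; ring

private lemma hh_low_rpow {x : ℝ} (hx : 0 < x) {a b : ℝ} (hab : a ≤ b) :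
    (b - a) * x ^ ((a + b) / 2) ≤ ∫ α in a..b, x ^ α := by
  have h1 : ∀ α : ℝ, x ^ α = Real.exp (α * Real.log x) := fun α => by
    rw [Real.rpow_def_of_pos hx, mul_comm]
  rw [intervalIntegral.integral_congr (g := fun α => Real.exp (α * Real.log x))
    (fun α _ => h1 α), h1]
  exact hh_low hab _

private lemma hh_high_rpow {x : ℝ} (hx : 0 < x) {a b : ℝ} (hab : a < b) :
    ∫ α in a..b, x ^ α ≤ (b - a) / 2 * (x ^ a + x ^ b) := by
  have h1 : ∀ α : ℝ, x ^ α = Real.exp (α * Real.log x) := fun α => by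
    rw [Real.rpow_def_of_pos hx, mul_comm]
  rw [intervalIntegral.integral_congr (g := fun α => Real.exp (α * Real.log x))
    (fun α _ => h1 α), h1 a, h1 b]
  exact hh_high hab _

private lemma scalar_amgm {t x : ℝ} (ht : 0 < t) (ht1 : t < 1) (hx : 0 < x) :
    x ^ t ≤ (1 - t) + t * x := by
  have h := Real.geom_mean_le_arith_mean2_weighted (by linarith : (0:ℝ) ≤ 1 - t) ht.le
    zero_le_one hx.le (by ring)
  rw [Real.one_rpow, one_mul, mul_one] at h
  exact h

private lemma scalar_low {t x : ℝ} (ht : 0 < t) (ht1 : t < 1) (hx : 0 < x) :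
    x ^ t ≤ ((1 - t) / t) * (∫ α in (0:ℝ)..t, x ^ α) +
      (t / (1 - t)) * (∫ α in t..(1:ℝ), x ^ α) := by
  have i1 := hh_low_rpow hx ht.le (a := 0) (b := t)
  have i2 := hh_low_rpow hx ht1.le (a := t) (b := 1)
  rw [sub_zero, zero_add] at i1
  have c1 : (0:ℝ) ≤ (1 - t) / t := div_nonneg (by linarith) ht.le
  have c2 : (0:ℝ) ≤ t / (1 - t) := div_nonneg ht.le (by linarith)
  calc x ^ t = (x ^ (t / 2)) ^ (1 - t) * (x ^ ((t + 1) / 2)) ^ t := by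
        rw [← Real.rpow_mul hx.le, ← Real.rpow_mul hx.le, ← Real.rpow_add hx]
        congr 1
        ring
    _ ≤ (1 - t) * x ^ (t / 2) + t * x ^ ((t + 1) / 2) :=
        Real.geom_mean_le_arith_mean2_weighted (by linarith) ht.le
          (Real.rpow_nonneg hx.le _) (Real.rpow_nonneg hx.le _) (by ring)
    _ = ((1 - t) / t) * (t * x ^ (t / 2)) + (t / (1 - t)) * ((1 - t) * x ^ ((t + 1) / 2)) := by
        have hne1 : t ≠ 0 := ht.ne'
        have hne2 : (1:ℝ) - t ≠ 0 := by linarith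
        field_simp
    _ ≤ _ := by
        refine add_le_add (mul_le_mul_of_nonneg_left ?_ c1) (mul_le_mul_of_nonneg_left ?_ c2)
        · exact i1
        · exact i2

private lemma scalar_high {t x : ℝ} (ht : 0 < t) (ht1 : t < 1) (hx : 0 < x) :
    ((1 - t) / t) * (∫ α in (0:ℝ)..t, x ^ α) + (t / (1 - t)) * (∫ α in t..(1:ℝ), x ^ α) ≤
      (1 / 2) * (x ^ t + ((1 - t) + t * x)) := by
  have i1 := hh_high_rpow hx ht (a := 0) (b := t)
  have i2 := hh_high_rpow hx ht1 (a := t) (b := 1)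
  rw [sub_zero, Real.rpow_zero] at i1
  rw [Real.rpow_one] at i2
  have c1 : (0:ℝ) ≤ (1 - t) / t := div_nonneg (by linarith) ht.le
  have c2 : (0:ℝ) ≤ t / (1 - t) := div_nonneg ht.le (by linarith)
  calc ((1 - t) / t) * (∫ α in (0:ℝ)..t, x ^ α) + (t / (1 - t)) * (∫ α in t..(1:ℝ), x ^ α)
      ≤ ((1 - t) / t) * (t / 2 * (1 + x ^ t)) + (t / (1 - t)) * ((1 - t) / 2 * (x ^ t + x)) :=
        add_le_add (mul_le_mul_of_nonneg_left i1 c1) (mul_le_mul_of_nonneg_left i2 c2)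
    _ = (1 / 2) * (x ^ t + ((1 - t) + t * x)) := by
        have hne1 : t ≠ 0 := ht.ne'
        have hne2 : (1:ℝ) - t ≠ 0 := by linarith
        field_simp
        ring

private lemma contOn_int {s : Set ℝ} (hs : s ⊆ Ioi 0) (a b : ℝ) :
    ContinuousOn (fun x : ℝ => ∫ α in a..b, x ^ α) s := by
  have k : Continuous fun L : ℝ => ∫ α in a..b, Real.exp (α * L) :=
    intervalIntegral.continuous_parametric_intervalIntegral_of_continuous' (by fun_prop) a b
  have h2 : ContinuousOn (fun x : ℝ => ∫ α in a..b, Real.exp (α * Real.log x)) s :=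
    k.comp_continuousOn (Real.continuousOn_log.mono (fun x hx => by
      simp only [mem_compl_iff, mem_singleton_iff]
      exact (hs hx).ne'))
  exact h2.congr (fun x hx => intervalIntegral.integral_congr
    (fun α _ => by rw [Real.rpow_def_of_pos (hs hx), mul_comm]))

/-- `A♯ₜB ≤ A ℓₜ B ≤ (1/2)(A♯ₜB + A∇ₜB) ≤ A∇ₜB` for positive invertible `A, B`. -/
theorem weighted_geom_log_heron_arith (t : ℝ) (ht : t ∈ Ioo (0:ℝ) 1)
    (A B : H →L[ℂ] H) (hA : 0 ≤ A) (hA' : IsUnit A) (hB : 0 ≤ B) (hB' : IsUnit B) :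
    weightedGeom t A B ≤ weightedLog t A B ∧
    weightedLog t A B ≤ (1/2 : ℝ) • (weightedGeom t A B + ((1 - t) • A + t • B)) ∧
    (1/2 : ℝ) • (weightedGeom t A B + ((1 - t) • A + t • B)) ≤ (1 - t) • A + t • B := by
  obtain ⟨ht0, ht1⟩ := ht
  have hAsa : IsSelfAdjoint A := hA.isSelfAdjoint
  have hspecA : ∀ x ∈ spectrum ℝ A, 0 < x := by
    intro x hx
    rcases (spectrum_nonneg_of_nonneg hA hx).lt_or_eq with h | h
    · exact h
    · rw [← h] at hx
      exact absurd hx ((spectrum.zero_notMem_iff ℝ).mpr hA')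
  have hcontS : ContinuousOn Real.sqrt (spectrum ℝ A) := Real.continuous_sqrt.continuousOn
  have hcontT : ContinuousOn (fun x : ℝ => x ^ (-(1:ℝ)/2)) (spectrum ℝ A) := fun x hx =>
    (Real.continuousAt_rpow_const x _ (Or.inl (hspecA x hx).ne')).continuousWithinAt
  simp only [weightedGeom, weightedLog, opMean]
  set S := cfc Real.sqrt A with hSdef
  set T := cfc (fun x : ℝ => x ^ (-(1:ℝ)/2)) A with hTdef
  have hSsa : IsSelfAdjoint S := cfc_predicate Real.sqrt A
  have hTsa : IsSelfAdjoint T := cfc_predicate _ A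
  have hST : S * T = 1 := by
    rw [hSdef, hTdef, ← cfc_mul _ _ A hcontS hcontT]
    have he : (spectrum ℝ A).EqOn (fun x => Real.sqrt x * x ^ (-(1:ℝ)/2)) (fun _ => (1:ℝ)) := by
      intro x hx
      have hx' := hspecA x hx
      simp only
      rw [Real.sqrt_eq_rpow, ← Real.rpow_add hx']
      norm_num
    rw [cfc_congr he, cfc_const 1 A hAsa, map_one]
  have hTS : T * S = 1 := by
    rw [hSdef, hTdef, ← cfc_mul _ _ A hcontT hcontS]
    have he : (spectrum ℝ A).EqOn (fun x => x ^ (-(1:ℝ)/2) * Real.sqrt x) (fun _ => (1:ℝ)) := by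
      intro x hx
      have hx' := hspecA x hx
      simp only
      rw [Real.sqrt_eq_rpow, ← Real.rpow_add hx']
      norm_num
    rw [cfc_congr he, cfc_const 1 A hAsa, map_one]
  have hSS : S * S = A := by
    rw [hSdef, ← cfc_mul _ _ A hcontS hcontS]
    have he : (spectrum ℝ A).EqOn (fun x => Real.sqrt x * Real.sqrt x) (id : ℝ → ℝ) :=
      fun x hx => Real.mul_self_sqrt (hspecA x hx).le
    rw [cfc_congr he, cfc_id ℝ A hAsa]
  have hTunit : IsUnit T := ⟨⟨T, S, hTS, hST⟩, rfl⟩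
  set C := T * B * T with hCdef
  have hCnn : (0 : H →L[ℂ] H) ≤ C := by
    have h := star_left_conjugate_nonneg hB T
    rwa [hTsa.star_eq] at h
  have hCsa : IsSelfAdjoint C := hCnn.isSelfAdjoint
  have hCunit : IsUnit C := (hTunit.mul hB').mul hTunit
  have hspecC : ∀ x ∈ spectrum ℝ C, 0 < x := by
    intro x hx
    rcases (spectrum_nonneg_of_nonneg hCnn hx).lt_or_eq with h | h
    · exact h
    · rw [← h] at hx
      exact absurd hx ((spectrum.zero_notMem_iff ℝ).mpr hCunit)
  have hspecC' : spectrum ℝ C ⊆ Ioi 0 := fun x hx => hspecC x hx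
  -- continuity of the relevant functions on the spectrum of C
  have hg : ContinuousOn (fun x : ℝ => x ^ t) (spectrum ℝ C) := fun x hx =>
    (Real.continuousAt_rpow_const x _ (Or.inl (hspecC x hx).ne')).continuousWithinAt
  have haff : ContinuousOn (fun x : ℝ => (1 - t) + t * x) (spectrum ℝ C) := by fun_prop
  have hf : ContinuousOn (fun x : ℝ => ((1 - t) / t) * (∫ α in (0:ℝ)..t, x ^ α) +
      (t / (1 - t)) * (∫ α in t..(1:ℝ), x ^ α)) (spectrum ℝ C) :=
    (continuousOn_const.mul (contOn_int hspecC' 0 t)).add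
      (continuousOn_const.mul (contOn_int hspecC' t 1))
  have hm : ContinuousOn (fun x : ℝ => (1/2) * (x ^ t + ((1 - t) + t * x))) (spectrum ℝ C) :=
    continuousOn_const.mul (hg.add haff)
  -- the cfc inequalities
  have step1 : cfc (fun x : ℝ => x ^ t) C ≤ cfc (fun x : ℝ => ((1 - t) / t) *
      (∫ α in (0:ℝ)..t, x ^ α) + (t / (1 - t)) * (∫ α in t..(1:ℝ), x ^ α)) C :=
    cfc_mono (fun x hx => scalar_low ht0 ht1 (hspecC x hx)) hg hf
  have step2 : cfc (fun x : ℝ => ((1 - t) / t) * (∫ α in (0:ℝ)..t, x ^ α) +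
      (t / (1 - t)) * (∫ α in t..(1:ℝ), x ^ α)) C ≤
      cfc (fun x : ℝ => (1/2) * (x ^ t + ((1 - t) + t * x))) C :=
    cfc_mono (fun x hx => scalar_high ht0 ht1 (hspecC x hx)) hf hm
  have step3 : cfc (fun x : ℝ => x ^ t) C ≤ cfc (fun x : ℝ => (1 - t) + t * x) C :=
    cfc_mono (fun x hx => scalar_amgm ht0 ht1 (hspecC x hx)) hg haff
  -- decomposition of cfc of the affine function
  have e1 : cfc (fun x : ℝ => (1 - t) + t * x) C = (1 - t) • (1 : H →L[ℂ] H) + t • C := by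
    rw [cfc_add C (fun _ => (1 - t)) (fun x => t * x) continuousOn_const (by fun_prop),
      cfc_const (1 - t) C hCsa, cfc_const_mul t _ C (by fun_prop), cfc_id' ℝ C hCsa,
      Algebra.algebraMap_eq_smul_one]
  have em : cfc (fun x : ℝ => (1/2) * (x ^ t + ((1 - t) + t * x))) C =
      (1/2 : ℝ) • (cfc (fun x : ℝ => x ^ t) C + cfc (fun x : ℝ => (1 - t) + t * x) C) := by
    rw [cfc_const_mul (1/2) (fun x : ℝ => x ^ t + ((1 - t) + t * x)) C (hg.add haff), cfc_add C _ _ hg haff]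
  -- conjugation computations
  have hmid : S * (T * B * T) * S = B := by
    have h1 : S * (T * B * T) * S = (S * T) * B * (T * S) := by simp only [mul_assoc]
    rw [h1, hST, hTS, one_mul, mul_one]
  have eN : S * cfc (fun x : ℝ => (1 - t) + t * x) C * S = (1 - t) • A + t • B := by
    rw [e1, hCdef]
    rw [mul_add, add_mul, mul_smul_comm, mul_smul_comm, smul_mul_assoc, smul_mul_assoc,
      mul_one, hSS, hmid]
  -- main inequalities by conjugation with S
  have I1 : S * cfc (fun x : ℝ => x ^ t) C * S ≤ S * cfc (fun x : ℝ => ((1 - t) / t) *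
      (∫ α in (0:ℝ)..t, x ^ α) + (t / (1 - t)) * (∫ α in t..(1:ℝ), x ^ α)) C * S := by
    have h := star_left_conjugate_le_conjugate step1 S
    rwa [hSsa.star_eq] at h
  have I2 : S * cfc (fun x : ℝ => ((1 - t) / t) * (∫ α in (0:ℝ)..t, x ^ α) +
      (t / (1 - t)) * (∫ α in t..(1:ℝ), x ^ α)) C * S ≤
      S * cfc (fun x : ℝ => (1/2) * (x ^ t + ((1 - t) + t * x))) C * S := by
    have h := star_left_conjugate_le_conjugate step2 S
    rwa [hSsa.star_eq] at h
  have I3 : S * cfc (fun x : ℝ => x ^ t) C * S ≤ (1 - t) • A + t • B := by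
    have h := star_left_conjugate_le_conjugate step3 S
    rw [hSsa.star_eq] at h
    rwa [eN] at h
  have eM : S * cfc (fun x : ℝ => (1/2) * (x ^ t + ((1 - t) + t * x))) C * S =
      (1/2 : ℝ) • (S * cfc (fun x : ℝ => x ^ t) C * S + ((1 - t) • A + t • B)) := by
    rw [em, ← eN]
    simp only [mul_smul_comm, smul_mul_assoc, mul_add, add_mul]
  have step4 : cfc (fun x : ℝ => (1/2) * (x ^ t + ((1 - t) + t * x))) C ≤
      cfc (fun x : ℝ => (1 - t) + t * x) C := by
    refine cfc_mono (fun x hx => ?_) hm haff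
    have := scalar_amgm ht0 ht1 (hspecC x hx)
    linarith
  have I4 : S * cfc (fun x : ℝ => (1/2) * (x ^ t + ((1 - t) + t * x))) C * S ≤
      S * cfc (fun x : ℝ => (1 - t) + t * x) C * S := by
    have h := star_left_conjugate_le_conjugate step4 S
    rwa [hSsa.star_eq] at h
  refine ⟨I1, ?_, ?_⟩
  · rw [← eM]
    exact I2
  · rw [← eM, ← eN]
    exact I4
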